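/- arXiv:1911.02325 — 2 statements merged into one kernel-verified Lean document; each statement's English description precedes it below -/
import Mathlib

section
/- Let A be an Artin algebra and C ⊆ mod A a full subcategory closed under direct sums and direct summands with Ω(C) ⊆ C. Then the phi-dimension of C equals the least l such that the induced syzygy endomorphism Ω̄ restricted to Ω̄^l(K_0(C)) is injective, i.e., φdim(C) = min{ l : Ω̄|_{Ω̄^l(K_0(C))} is injective }. -/
open Function

section Syzygies

variable (A : Type) [Ring A]

/-- Bundled (left) `A`-modules with carrier in `Type 0`. -/
abbrev Mdl := ModuleCat.{0} A

/-- `f : P →ₗ[A] M` is a projective cover: `P` is projective, `f` is surjective,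
and no proper submodule of `P` maps onto `M`. -/
def IsProjCover {P M : Type} [AddCommGroup P] [Module A P] [AddCommGroup M] [Module A M]
    (f : P →ₗ[A] M) : Prop :=
  Module.Projective A P ∧ Function.Surjective f ∧
    ∀ N : Submodule A P, N ≠ ⊤ → ¬ Function.Surjective (f ∘ₗ N.subtype)

/-- `S` is (isomorphic to) the syzygy `Ω(M)`, i.e. the kernel of a projective cover of `M`. -/
def IsSyz (S M : Mdl A) : Prop :=
  ∃ (P : Mdl A) (f : P →ₗ[A] M), Module.Finite A P ∧ IsProjCover A f ∧
    Nonempty (S ≃ₗ[A] LinearMap.ker f)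

/-- `S ≅ Ω^n(M)`. -/
def IsNthSyz : ℕ → Mdl A → Mdl A → Prop
  | 0, S, M => Nonempty (S ≃ₗ[A] M)
  | (n + 1), S, M => ∃ T : Mdl A, IsSyz A T M ∧ IsNthSyz n S T

/-- `M ∈ Ω^∞(mod A)`: for every `n`, `M` is an `n`-th syzygy of some finitely
generated module. -/
def MemOmegaInf (M : Mdl A) : Prop :=
  ∀ n : ℕ, ∃ N : Mdl A, Module.Finite A N ∧ IsNthSyz A n M N

/-- `M` is `Ω`-periodic: `Ω^m(M) ≅ M` for some `m ≥ 1`. -/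
def IsPeriodic (M : Mdl A) : Prop := ∃ m : ℕ, 1 ≤ m ∧ IsNthSyz A m M M

/-- Projective dimension of `M` is at most `n`. -/
def pdLE (M : Mdl A) (n : ℕ) : Prop :=
  ∃ S : Mdl A, IsNthSyz A n S M ∧ Module.Projective A S

/-- Projective dimension of `M`, as an element of `ℕ∞` (`⊤` = infinite). -/
noncomputable def pd (M : Mdl A) : ℕ∞ :=
  sInf {l : ℕ∞ | ∃ n : ℕ, l = n ∧ pdLE A M n}

/-- A doubly infinite exact complex of finitely generated projectives which stays
exact after applying `Hom(-, Q)` for every projective `Q` (total acyclicity). -/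
def IsTotallyAcyclic (P : ℤ → Mdl A) (d : ∀ i : ℤ, P i →ₗ[A] P (i + 1)) : Prop :=
  (∀ i, Module.Projective A (P i)) ∧ (∀ i, Module.Finite A (P i)) ∧
  (∀ i, LinearMap.range (d i) = LinearMap.ker (d (i + 1))) ∧
  (∀ (i : ℤ) (N : Mdl A), Module.Projective A N →
    ∀ g : P (i + 1) →ₗ[A] N, g ∘ₗ d i = 0 → ∃ h : P (i + 1 + 1) →ₗ[A] N, h ∘ₗ d (i + 1) = g)

/-- `M` is Gorenstein projective: a cycle of a totally acyclic complex of projectives. -/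
def IsGorensteinProj (M : Mdl A) : Prop :=
  ∃ (P : ℤ → Mdl A) (d : ∀ i : ℤ, P i →ₗ[A] P (i + 1)),
    IsTotallyAcyclic A P d ∧ Nonempty (M ≃ₗ[A] LinearMap.ker (d 0))

/-- `N` is a direct summand of `M`. -/
def Summand (N M : Mdl A) : Prop := ∃ L : Mdl A, Nonempty (M ≃ₗ[A] N × L)

/-- `M` is indecomposable. -/
def Indec (M : Mdl A) : Prop :=
  Nontrivial M ∧ ∀ (N L : Mdl A), Nonempty (M ≃ₗ[A] N × L) → Subsingleton N ∨ Subsingleton L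

/-- `A` is syzygy finite (of `Ω^n`-finite representation type for some `n`): there are
finitely many indecomposables occurring as direct summands of `n`-th syzygies. -/
def SyzygyFinite : Prop :=
  ∃ (n : ℕ) (l : List (Mdl A)), ∀ M S N : Mdl A, Module.Finite A M →
    IsNthSyz A n S M → Indec A N → Summand A N S → ∃ L ∈ l, Nonempty (N ≃ₗ[A] L)

/-- Direct sum of a list of modules. -/
def listProd : List (Mdl A) → Mdl A
  | [] => ModuleCat.of A PUnit
  | N :: t => ModuleCat.of A (N × (listProd t))

open scoped Classical in
/-- `‖M‖`: the number (with multiplicity) of indecomposable direct summands of `M`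
having infinite projective dimension. -/
noncomputable def normVal (M : Mdl A) : ℕ :=
  sSup {n : ℕ | ∃ l : List (Mdl A), Nonempty (M ≃ₗ[A] listProd A l) ∧
    (∀ N ∈ l, Indec A N) ∧ n = l.countP (fun N => decide (pd A N = ⊤))}

end Syzygies

section K0

variable (A : Type) [Ring A]

/-- Finitely generated bundled `A`-modules. -/
def FGMod : Type 1 := {M : Mdl A // Module.Finite A M}

/-- The relations defining `K₀(A)`: isomorphic modules are identified, the class of a
direct sum is the sum of the classes, and classes of projectives vanish. -/
def K0Rels : AddSubgroup (FreeAbelianGroup (FGMod A)) :=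
  AddSubgroup.closure
    ({x | ∃ M N : FGMod A, Nonempty (↥M.1 ≃ₗ[A] ↥N.1) ∧
        x = FreeAbelianGroup.of M - FreeAbelianGroup.of N} ∪
     {x | ∃ P : FGMod A, Module.Projective A P.1 ∧ x = FreeAbelianGroup.of P} ∪
     {x | ∃ M N S : FGMod A, Nonempty (↥S.1 ≃ₗ[A] ↥M.1 × ↥N.1) ∧
        x = FreeAbelianGroup.of S - FreeAbelianGroup.of M - FreeAbelianGroup.of N})

/-- The Igusa–Todorov group `K₀(A)`: free abelian group on f.g. modules modulo the relations
`[M ⊕ N] = [M] + [N]`, `[P] = 0` for `P` projective (and `[M] = [N]` for `M ≅ N`). -/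
def K0 : Type 1 := FreeAbelianGroup (FGMod A) ⧸ K0Rels A

instance : AddCommGroup (K0 A) :=
  inferInstanceAs (AddCommGroup (FreeAbelianGroup (FGMod A) ⧸ K0Rels A))

/-- The class `[M] ∈ K₀(A)`. -/
def clsK0 (M : FGMod A) : K0 A := QuotientAddGroup.mk (FreeAbelianGroup.of M)

/-- `ω` is the endomorphism `Ω̄` of `K₀(A)` induced by the syzygy operator. -/
def IsSyzygyOperator (ω : K0 A →+ K0 A) : Prop :=
  ∀ M S : FGMod A, IsSyz A S.1 M.1 → ω (clsK0 A M) = clsK0 A S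

/-- `⟨add M⟩`: the subgroup of `K₀(A)` generated by classes of direct summands of `M`. -/
def addSubgrp (M : Mdl A) : AddSubgroup (K0 A) :=
  AddSubgroup.closure (clsK0 A '' {N : FGMod A | Summand A N.1 M})

/-- The Igusa–Todorov function `φ` (relative to the syzygy operator `ω`), with values
in `ℕ∞`: the least `l` such that `ω` is injective on `ω^[l+s]⟨add M⟩` for all `s`. -/
noncomputable def phiIT (ω : K0 A →+ K0 A) (M : Mdl A) : ℕ∞ :=
  sInf {x : ℕ∞ | ∃ l : ℕ, x = l ∧ ∀ s : ℕ,
    Set.InjOn ω ((⇑ω)^[l + s] '' ((addSubgrp A M : AddSubgroup (K0 A)) : Set (K0 A)))}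

/-- The `φ`-dimension of a class of modules. -/
noncomputable def phidimOn (ω : K0 A →+ K0 A) (C : Set (Mdl A)) : ℕ∞ :=
  sSup ((phiIT A ω) '' C)

end K0


section Aux

open Function

/-- Transfer semisimplicity from `R ⧸ J` down to `R` for `J`-torsion modules. -/
theorem Aux.semisimple_of_torsion {R : Type*} [CommRing R] (J : Ideal R)
    [IsSemisimpleRing (R ⧸ J)] {N : Type*} [AddCommGroup N] [Module R N]
    (htor : Module.IsTorsionBySet R N (J : Set R)) : IsSemisimpleModule R N := by
  letI : Module (R ⧸ J) N := htor.module
  let l : N →ₛₗ[Ideal.Quotient.mk J] N :=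
    { toFun := id, map_add' := fun _ _ => rfl,
      map_smul' := fun r x => (htor.mk_smul r x).symm }
  haveI : RingHomSurjective (Ideal.Quotient.mk J) := ⟨Ideal.Quotient.mk_surjective⟩
  have h3 : IsSemisimpleModule (R ⧸ J) N := inferInstance
  exact (l.isSemisimpleModule_iff_of_bijective Function.bijective_id).mpr h3

/-- Hopkins–Levitzki: an artinian module over a commutative artinian ring is noetherian. -/
theorem Aux.isNoeth_of_isArt {R M : Type*} [CommRing R] [IsArtinianRing R]
    [AddCommGroup M] [Module R M] [IsArtinian R M] : IsNoetherian R M := by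
  obtain ⟨n, hn⟩ := IsArtinianRing.isNilpotent_jacobson_bot (R := R)
  set J : Ideal R := (⊥ : Ideal R).jacobson with hJ
  haveI hsR : IsSemisimpleRing (R ⧸ J) := by
    have : IsReduced (R ⧸ J) :=
      (Ideal.isRadical_iff_quotient_reduced J).mp (Ideal.isRadical_jacobson ⊥)
    exact IsArtinianRing.isSemisimpleRing_of_isReduced _
  have key : ∀ (k : ℕ) (N : Type _) [AddCommGroup N] [Module R N] [IsArtinian R N],
      J ^ k • (⊤ : Submodule R N) = ⊥ → IsNoetherian R N := by
    intro k
    induction k with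
    | zero =>
      intro N _ _ _ h
      rw [pow_zero, Ideal.one_eq_top, Submodule.top_smul] at h
      have : Subsingleton N := by
        constructor
        intro a b
        have ha : a ∈ (⊥ : Submodule R N) := h ▸ Submodule.mem_top
        have hb : b ∈ (⊥ : Submodule R N) := h ▸ Submodule.mem_top
        rw [Submodule.mem_bot] at ha hb; rw [ha, hb]
      infer_instance
    | succ k ih =>
      intro N _ _ _ h
      set P : Submodule R N := J • ⊤ with hP
      have h1 : IsNoetherian R ↥P := by
        apply ih
        apply Submodule.map_injective_of_injective P.injective_subtype
        rw [Submodule.map_smul'', Submodule.map_bot, Submodule.map_top, Submodule.range_subtype,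
          hP, ← Submodule.smul_assoc, Ideal.smul_eq_mul, ← pow_succ]
        exact h
      have htor : Module.IsTorsionBySet R (N ⧸ P) (J : Set R) := by
        intro x j
        obtain ⟨m, rfl⟩ := Submodule.Quotient.mk_surjective P x
        rw [← Submodule.Quotient.mk_smul, Submodule.Quotient.mk_eq_zero]
        exact Submodule.smul_mem_smul j.2 Submodule.mem_top
      haveI hss : IsSemisimpleModule R (N ⧸ P) := Aux.semisimple_of_torsion J htor
      have h2 : IsNoetherian R (N ⧸ P) :=
        (List.TFAE.out (IsSemisimpleModule.finite_tfae (R := R) (M := N ⧸ P))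
          (n₁ := 2) (n₂ := 1) rfl rfl).mp inferInstance
      exact (isNoetherian_iff_submodule_quotient P).mpr ⟨h1, h2⟩
  exact key n M (by rw [hn]; exact Submodule.bot_smul _)

/-- Fitting-lemma step: a proper submodule surjecting onto `M` contains a proper
projective direct summand of `P` still surjecting onto `M`. -/
theorem Aux.fitting_step {A : Type*} [Ring A] {P M : Type*} [AddCommGroup P] [Module A P]
    [AddCommGroup M] [Module A M] [IsArtinian A P] [IsNoetherian A P] [Module.Projective A P]
    (f : P →ₗ[A] M) (hf : Surjective f) (N : Submodule A P) (hN : N ≠ ⊤)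
    (hNs : Surjective (f ∘ₗ N.subtype)) :
    ∃ Q : Submodule A P, Q ≠ ⊤ ∧ Module.Projective A Q ∧ Surjective (f ∘ₗ Q.subtype) := by
  obtain ⟨g, hg⟩ := Module.projective_lifting_property (f ∘ₗ N.subtype) f hNs
  set h : P →ₗ[A] P := N.subtype ∘ₗ g with hh
  have hfh1 : ∀ x, f (h x) = f x := by
    intro x
    have := congrArg (fun (u : P →ₗ[A] M) => u x) hg
    simpa [hh] using this
  have hfh : ∀ (k : ℕ) (x : P), f ((h ^ k) x) = f x := by
    intro k
    induction k with
    | zero => intro x; simp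
    | succ k ih =>
      intro x
      rw [pow_succ, Module.End.mul_apply, ih (h x), hfh1]
  obtain ⟨n, hn⟩ := Filter.eventually_atTop.mp h.eventually_isCompl_ker_pow_range_pow
  have hc := hn (max n 1) (le_max_left _ _)
  set Q := LinearMap.range (h ^ max n 1) with hQdef
  have hQN : Q ≤ N := by
    rintro x ⟨y, rfl⟩
    have hm : max n 1 = (max n 1 - 1) + 1 := by omega
    rw [hm, pow_succ', Module.End.mul_apply]
    exact (g ((h ^ (max n 1 - 1)) y)).2
  refine ⟨Q, fun hQt => hN (top_unique (hQt ▸ hQN)), ?_, ?_⟩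
  · exact Module.Projective.of_split Q.subtype
      (Submodule.linearProjOfIsCompl Q _ hc.symm)
      (Submodule.linearProjOfIsCompl_comp_subtype hc.symm)
  · intro m
    obtain ⟨x, rfl⟩ := hf m
    exact ⟨⟨(h ^ max n 1) x, LinearMap.mem_range_self _ x⟩, hfh _ x⟩

/-- Every finitely generated module over an Artin algebra has a syzygy, i.e. admits a
projective cover with finitely generated kernel. -/
theorem Aux.exists_syz (R A : Type) [CommRing R] [IsArtinianRing R] [Ring A] [Algebra R A]
    [Module.Finite R A] (M : Mdl A) (hM : Module.Finite A M) :
    ∃ S : Mdl A, Module.Finite A S ∧ IsSyz A S M := by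
  obtain ⟨n, f, hf⟩ := Module.Finite.exists_fin' A M
  haveI : IsArtinian R A := isArtinian_of_fg_of_artinian'
  haveI ha : IsArtinian A (Fin n → A) := isArtinian_of_tower R inferInstance
  haveI hno : IsNoetherian A (Fin n → A) :=
    isNoetherian_of_tower R (Aux.isNoeth_of_isArt (R := R) (M := Fin n → A))
  set 𝒮 : Set (Submodule A (Fin n → A)) :=
    {Q | Module.Projective A Q ∧ Surjective (f ∘ₗ Q.subtype)} with h𝒮
  have htop : (⊤ : Submodule A (Fin n → A)) ∈ 𝒮 := by
    constructor
    · exact Module.Projective.of_equiv (Submodule.topEquiv (R := A) (M := Fin n → A)).symm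
    · intro m; obtain ⟨x, rfl⟩ := hf m; exact ⟨⟨x, trivial⟩, rfl⟩
  obtain ⟨Q, hQ, hQmin⟩ := IsArtinian.set_has_minimal 𝒮 ⟨⊤, htop⟩
  haveI hQproj : Module.Projective A Q := hQ.1
  haveI : IsArtinian A ↥Q := inferInstance
  haveI : IsNoetherian A ↥Q := inferInstance
  set f' : ↥Q →ₗ[A] ↥M := f ∘ₗ Q.subtype with hf'
  have hcover : IsProjCover A f' := by
    refine ⟨hQ.1, hQ.2, ?_⟩
    intro N hN hNs
    obtain ⟨Q', hQ't, hQ'p, hQ's⟩ := Aux.fitting_step f' hQ.2 N hN hNs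
    set Q'' := Q'.map Q.subtype with hQ''
    have he : ↥Q' ≃ₗ[A] ↥Q'' := Submodule.equivMapOfInjective Q.subtype Q.injective_subtype Q'
    have hmem : Q'' ∈ 𝒮 := by
      constructor
      · exact Module.Projective.of_equiv he
      · intro m
        obtain ⟨x, hx⟩ := hQ's m
        refine ⟨⟨Q.subtype x.1, Submodule.mem_map_of_mem x.2⟩, hx⟩
    have hlt : Q'' < Q := by
      refine lt_of_le_of_ne (Submodule.map_subtype_le Q Q') ?_
      intro heq
      apply hQ't
      rw [eq_top_iff]
      intro y _
      have hy : (y : Fin n → A) ∈ Q'' := by rw [heq]; exact y.2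
      obtain ⟨z, hz, hzy⟩ := hy
      have : z = y := Subtype.ext hzy
      exact this ▸ hz
    exact hQmin Q'' hmem hlt
  have hfin1 : Module.Finite A ↥(LinearMap.ker f') := ⟨IsNoetherian.noetherian ⊤⟩
  have hfin2 : Module.Finite A ↥Q := ⟨IsNoetherian.noetherian ⊤⟩
  refine ⟨ModuleCat.of A ↥(LinearMap.ker f'), hfin1, ?_⟩
  exact ⟨ModuleCat.of A ↥Q, f', hfin2, hcover, ⟨LinearEquiv.refl A _⟩⟩

/-- Every module is a summand of itself. -/
theorem Aux.summand_self (A : Type) [Ring A] (M : Mdl A) : Summand A M M := by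
  refine ⟨ModuleCat.of A PUnit, ⟨?_⟩⟩
  exact
    { toFun := fun x => (x, PUnit.unit), invFun := Prod.fst,
      left_inv := fun _ => rfl, right_inv := fun _ => rfl,
      map_add' := fun _ _ => rfl, map_smul' := fun _ _ => rfl }

theorem Aux.summand_prod_left (A : Type) [Ring A] {N M₁ : Mdl A} (M₂ : Mdl A)
    (h : Summand A N M₁) : Summand A N (ModuleCat.of A (↥M₁ × ↥M₂)) := by
  obtain ⟨L, ⟨e⟩⟩ := h
  exact ⟨ModuleCat.of A (↥L × ↥M₂),
    ⟨(e.prodCongr (LinearEquiv.refl A ↥M₂)).trans (LinearEquiv.prodAssoc A ↥N ↥L ↥M₂)⟩⟩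

theorem Aux.summand_prod_right (A : Type) [Ring A] {N M₂ : Mdl A} (M₁ : Mdl A)
    (h : Summand A N M₂) : Summand A N (ModuleCat.of A (↥M₁ × ↥M₂)) := by
  obtain ⟨L, ⟨e⟩⟩ := h
  exact ⟨ModuleCat.of A (↥L × ↥M₁),
    ⟨((LinearEquiv.prodComm A ↥M₁ ↥M₂).trans (e.prodCongr (LinearEquiv.refl A ↥M₁))).trans
      (LinearEquiv.prodAssoc A ↥N ↥L ↥M₁)⟩⟩

theorem Aux.iter_map_sub {A : Type} [Ring A] (ω : K0 A →+ K0 A) (n : ℕ) (a b : K0 A) :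
    (⇑ω)^[n] (a - b) = (⇑ω)^[n] a - (⇑ω)^[n] b := by
  induction n with
  | zero => rfl
  | succ n ih =>
    rw [Function.iterate_succ_apply', Function.iterate_succ_apply',
      Function.iterate_succ_apply', ih, map_sub]

theorem Aux.iter_map_zero {A : Type} [Ring A] (ω : K0 A →+ K0 A) (n : ℕ) :
    (⇑ω)^[n] (0 : K0 A) = 0 := by
  induction n with
  | zero => rfl
  | succ n ih => rw [Function.iterate_succ_apply', ih, map_zero]

theorem Aux.exists_nat_le_of_sInf_le {S : Set ℕ∞} (hS : ∀ x ∈ S, ∃ n : ℕ, x = n) {l : ℕ}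
    (h : sInf S ≤ (l : ℕ∞)) : ∃ n : ℕ, n ≤ l ∧ (n : ℕ∞) ∈ S := by
  by_contra hc
  push_neg at hc
  have h1 : ((l + 1 : ℕ) : ℕ∞) ≤ sInf S := by
    apply le_sInf
    intro x hx
    obtain ⟨m, rfl⟩ := hS x hx
    have hm : ¬ m ≤ l := fun hle => hc m hle hx
    exact_mod_cast (by omega : l + 1 ≤ m)
  have h2 := h1.trans h
  have : l + 1 ≤ l := by exact_mod_cast h2
  omega

end Aux

/-- For an Artin algebra `A` and a full subcategory `C` of `mod A` closed under direct sums,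
direct summands (and isomorphisms) with `Ω(C) ⊆ C`, the `φ`-dimension of `C` equals the
least `l` such that `Ω̄` is injective on `Ω̄^l(K₀(C))`. -/
theorem stmt13 (R A : Type) [CommRing R] [IsArtinianRing R] [Ring A] [Algebra R A]
    [Module.Finite R A] (ω : K0 A →+ K0 A) (hω : IsSyzygyOperator A ω)
    (C : Set (Mdl A)) (hCfin : ∀ M ∈ C, Module.Finite A M)
    (hCiso : ∀ M ∈ C, ∀ N : Mdl A, Nonempty (↥N ≃ₗ[A] ↥M) → N ∈ C)
    (hCsum : ∀ M ∈ C, ∀ N ∈ C, ModuleCat.of A (↥M × ↥N) ∈ C)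
    (hCsummand : ∀ M ∈ C, ∀ N : Mdl A, Summand A N M → N ∈ C)
    (hCsyz : ∀ M ∈ C, ∀ S : Mdl A, IsSyz A S M → S ∈ C) :
    phidimOn A ω C =
      sInf {x : ℕ∞ | ∃ l : ℕ, x = l ∧ Set.InjOn ω ((⇑ω)^[l] ''
        ((AddSubgroup.closure (clsK0 A '' {M : FGMod A | M.1 ∈ C}) :
          AddSubgroup (K0 A)) : Set (K0 A)))} := by
  classical
  set Gset : Set (K0 A) := clsK0 A '' {M : FGMod A | M.1 ∈ C} with hGset
  set K : AddSubgroup (K0 A) := AddSubgroup.closure Gset with hK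
  have homega : ∀ z ∈ K, ω z ∈ K := by
    intro z hz
    induction hz using AddSubgroup.closure_induction with
    | mem x hx =>
      obtain ⟨N, hN, rfl⟩ := hx
      obtain ⟨S, hSfin', hSyz⟩ := Aux.exists_syz R A N.1 N.2
      have hSC : S ∈ C := hCsyz N.1 hN S hSyz
      have hSfin : Module.Finite A S := hCfin S hSC
      rw [hω N ⟨S, hSfin⟩ hSyz]
      exact AddSubgroup.subset_closure ⟨⟨S, hSfin⟩, hSC, rfl⟩
    | zero => rw [map_zero]; exact zero_mem K
    | add x y hx hy ihx ihy => rw [map_add]; exact add_mem ihx ihy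
    | neg x hx ih => rw [map_neg]; exact neg_mem ih
  have hiter : ∀ (s : ℕ), ∀ z ∈ K, (⇑ω)^[s] z ∈ K := by
    intro s
    induction s with
    | zero => intro z hz; exact hz
    | succ s ih =>
      intro z hz
      rw [Function.iterate_succ_apply']
      exact homega _ (ih z hz)
  have haddle : ∀ M ∈ C, addSubgrp A M ≤ K := by
    intro M hM
    rw [addSubgrp]
    apply (AddSubgroup.closure_le K).mpr
    rintro x ⟨N, hN, rfl⟩
    exact AddSubgroup.subset_closure ⟨N, hCsummand M hM N.1 hN, rfl⟩
  have hmemK : ∀ z ∈ K, z = 0 ∨ ∃ M ∈ C, z ∈ addSubgrp A M := by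
    intro z hz
    induction hz using AddSubgroup.closure_induction with
    | mem x hx =>
      obtain ⟨N, hN, rfl⟩ := hx
      exact Or.inr ⟨N.1, hN, AddSubgroup.subset_closure ⟨N, Aux.summand_self A N.1, rfl⟩⟩
    | zero => exact Or.inl rfl
    | add x y hx hy ihx ihy =>
      rcases ihx with rfl | ⟨M₁, hM₁, hx'⟩
      · rw [zero_add]; exact ihy
      rcases ihy with rfl | ⟨M₂, hM₂, hy'⟩
      · exact Or.inr ⟨M₁, hM₁, by rw [add_zero]; exact hx'⟩
      · refine Or.inr ⟨ModuleCat.of A (↥M₁ × ↥M₂), hCsum M₁ hM₁ M₂ hM₂, add_mem ?_ ?_⟩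
        · refine AddSubgroup.closure_mono (Set.image_mono ?_) hx'
          intro N hN
          exact Aux.summand_prod_left A M₂ hN
        · refine AddSubgroup.closure_mono (Set.image_mono ?_) hy'
          intro N hN
          exact Aux.summand_prod_right A M₁ hN
    | neg x hx ih =>
      rcases ih with rfl | ⟨M, hM, h⟩
      · exact Or.inl neg_zero
      · exact Or.inr ⟨M, hM, neg_mem h⟩
  apply le_antisymm
  · apply sSup_le
    rintro x ⟨M, hMC, rfl⟩
    apply le_sInf
    rintro y ⟨l, rfl, hinj⟩
    apply sInf_le
    refine ⟨l, rfl, fun s => hinj.mono ?_⟩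
    rintro t ⟨a, ha, rfl⟩
    refine ⟨(⇑ω)^[s] a, hiter s a (haddle M hMC ha), ?_⟩
    rw [← Function.iterate_add_apply]
  · cases hcase : phidimOn A ω C with
    | top => exact le_top
    | coe l =>
      apply sInf_le
      refine ⟨l, rfl, ?_⟩
      rintro x ⟨a, haK, rfl⟩ y ⟨b, hbK, rfl⟩ hxy
      have hsub : (⇑ω)^[l] (a - b) = (⇑ω)^[l] a - (⇑ω)^[l] b := Aux.iter_map_sub ω l a b
      have hzero : ω ((⇑ω)^[l] (a - b)) = ω 0 := by
        rw [hsub, map_sub, hxy, sub_self, map_zero]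
      rcases hmemK (a - b) (sub_mem haK hbK) with h0 | ⟨M, hMC, hmem⟩
      · have : (⇑ω)^[l] a - (⇑ω)^[l] b = 0 := by
          rw [← hsub, h0, Aux.iter_map_zero]
        exact sub_eq_zero.mp this
      · have hle : phiIT A ω M ≤ (l : ℕ∞) := by
          rw [← hcase]
          exact le_sSup ⟨M, hMC, rfl⟩
        rw [phiIT] at hle
        obtain ⟨m, hml, hmem'⟩ := Aux.exists_nat_le_of_sInf_le
          (fun x hx => by obtain ⟨l', hl', _⟩ := hx; exact ⟨l', hl'⟩) hle
        obtain ⟨l', hcast, hP⟩ := hmem'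
        have hl'm : l' = m := by exact_mod_cast hcast.symm
        subst hl'm
        have hinj := hP (l - l')
        rw [show l' + (l - l') = l from by omega] at hinj
        have h1 : (⇑ω)^[l] (a - b) ∈ (⇑ω)^[l] '' ((addSubgrp A M : AddSubgroup (K0 A)) : Set (K0 A)) :=
          ⟨a - b, hmem, rfl⟩
        have h2 : (0 : K0 A) ∈ (⇑ω)^[l] '' ((addSubgrp A M : AddSubgroup (K0 A)) : Set (K0 A)) :=
          ⟨0, zero_mem _, Aux.iter_map_zero ω l⟩
        have h3 : (⇑ω)^[l] (a - b) = 0 := hinj h1 h2 (by rw [hzero, map_zero])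
        have : (⇑ω)^[l] a - (⇑ω)^[l] b = 0 := by rw [← hsub, h3]
        exact sub_eq_zero.mp this
end

section
/- Let A = kQ/I be the monomial algebra with quiver Q having vertices 1, 2, arrows α: 1 → 2, β: 2 → 1, γ: 2 → 2, and I = ⟨αβ, γ²⟩. Then the right ideal Aγ (the module generated by the path γ) satisfies Ω(Aγ) ≅ Aγ, i.e., Aγ is a 1-periodic non-projective module; moreover γ is a perfect path. -/
open Function

section PathAlgebra

open FreeAlgebra

/-- Generators of the path algebra of a quiver: one for each vertex and each arrow. -/
inductive PAGen (V E : Type) : Type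
  | vert : V → PAGen V E
  | arr : E → PAGen V E

variable (k : Type) [CommRing k] (V E : Type) [Fintype V] (s t : E → V)

/-- Defining relations of the truncated path algebra `kQ/J^K` of the quiver with vertex set
`V`, arrow set `E`, source map `s` and target map `t`.  Lists of arrows are written in
multiplication order: `[e₁, …, eₙ]` stands for the product `e₁ ⋯ eₙ` (so `eₙ` is traversed
first, and composability means `s eᵢ = t eᵢ₊₁`). -/
inductive TruncRel (K : ℕ) : FreeAlgebra k (PAGen V E) → FreeAlgebra k (PAGen V E) → Prop
  | vert_idem (v : V) :
      TruncRel K (ι k (PAGen.vert v) * ι k (PAGen.vert v)) (ι k (PAGen.vert v))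
  | vert_orth (v w : V) (h : v ≠ w) :
      TruncRel K (ι k (PAGen.vert v) * ι k (PAGen.vert w)) 0
  | sum_vert : TruncRel K (∑ v : V, ι k (PAGen.vert v)) 1
  | arr_tgt (e : E) :
      TruncRel K (ι k (PAGen.vert (t e)) * ι k (PAGen.arr e)) (ι k (PAGen.arr e))
  | arr_src (e : E) :
      TruncRel K (ι k (PAGen.arr e) * ι k (PAGen.vert (s e))) (ι k (PAGen.arr e))
  | trunc (l : List E) (h : l.length = K) :
      TruncRel K ((l.map (fun e => ι k (PAGen.arr e))).prod) 0

/-- The truncated path algebra `kQ/J^K`. -/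
abbrev TruncPathAlg (K : ℕ) : Type := RingQuot (TruncRel k V E s t K)

/-- There is an arrow from `a` to `b`. -/
def StepRel (a b : V) : Prop := ∃ e : E, s e = a ∧ t e = b

/-- The quiver has an oriented cycle. -/
def HasOrientedCycle : Prop := ∃ v : V, Relation.TransGen (StepRel V E s t) v v

/-- The quiver is connected (as an undirected graph). -/
def IsConnectedQ : Prop :=
  ∀ a b : V, Relation.ReflTransGen
    (fun x y => StepRel V E s t x y ∨ StepRel V E s t y x) a b

/-- `l` is a composable list of arrows (a path), in multiplication order. -/
def IsPathList (l : List E) : Prop := l.Chain' (fun e f => s e = t f)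

/-- Global dimension of a ring `B` as an element of `ℕ∞`, via finitely generated modules. -/
noncomputable def gldimVal (B : Type) [Ring B] : ℕ∞ :=
  sInf {x : ℕ∞ | ∃ n : ℕ, x = n ∧ ∀ M : Mdl B, Module.Finite B M → pdLE B M n}

end PathAlgebra

section Stmt17

open FreeAlgebra

/-- Arrows of the quiver: `a : 1 → 2`, `b : 2 → 1`, and a loop `g` at `2`
(vertex `1` is `0 : Fin 2`, vertex `2` is `1 : Fin 2`). -/
inductive Arr3 : Type
  | a | b | g

instance : Inhabited Arr3 := ⟨Arr3.a⟩

def s17 : Arr3 → Fin 2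
  | Arr3.a => 0 | Arr3.b => 1 | Arr3.g => 1

def t17 : Arr3 → Fin 2
  | Arr3.a => 1 | Arr3.b => 0 | Arr3.g => 1

variable (k : Type) [Field k]

/-- Relations of `A = kQ/⟨αβ, γ²⟩` (products written in multiplication order, so `αβ`
is `α` after `β`). -/
inductive A17Rel : FreeAlgebra k (PAGen (Fin 2) Arr3) → FreeAlgebra k (PAGen (Fin 2) Arr3) → Prop
  | vert_idem (v : Fin 2) :
      A17Rel (ι k (PAGen.vert v) * ι k (PAGen.vert v)) (ι k (PAGen.vert v))
  | vert_orth (v w : Fin 2) (h : v ≠ w) :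
      A17Rel (ι k (PAGen.vert v) * ι k (PAGen.vert w)) 0
  | sum_vert : A17Rel (∑ v : Fin 2, ι k (PAGen.vert v)) 1
  | arr_tgt (e : Arr3) :
      A17Rel (ι k (PAGen.vert (t17 e)) * ι k (PAGen.arr e)) (ι k (PAGen.arr e))
  | arr_src (e : Arr3) :
      A17Rel (ι k (PAGen.arr e) * ι k (PAGen.vert (s17 e))) (ι k (PAGen.arr e))
  | rel_ab : A17Rel (ι k (PAGen.arr Arr3.a) * ι k (PAGen.arr Arr3.b)) 0
  | rel_gg : A17Rel (ι k (PAGen.arr Arr3.g) * ι k (PAGen.arr Arr3.g)) 0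

/-- The monomial algebra `A = kQ/⟨αβ, γ²⟩`. -/
abbrev A17 : Type := RingQuot (A17Rel k)

/-- The element of `A` determined by a path (list of arrows in multiplication order). -/
noncomputable def pathEl17 (l : List Arr3) : A17 k :=
  (l.map (fun e => RingQuot.mkAlgHom k (A17Rel k) (ι k (PAGen.arr e)))).prod

/-- The image of the loop `γ` in `A`. -/
noncomputable def gammaEl : A17 k := pathEl17 k [Arr3.g]

/-- The ideal `Aγ`. -/
noncomputable def AGamma : Submodule (A17 k) (A17 k) :=
  Submodule.span (A17 k) {gammaEl k}

/-- A nonzero nontrivial path of `A`. -/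
def NZPath17 (l : List Arr3) : Prop :=
  l ≠ [] ∧ IsPathList (Fin 2) Arr3 s17 t17 l ∧ pathEl17 k l ≠ 0

/-- Source of a path (in multiplication order, the source of its last arrow). -/
def srcL17 (l : List Arr3) : Fin 2 := s17 l.getLast!

/-- Target of a path (the target of its first arrow in multiplication order). -/
def tgtL17 (l : List Arr3) : Fin 2 := t17 l.head!

/-- `(p, q)` is a perfect pair: `p`, `q` nonzero nontrivial paths with `s(p) = t(q)`,
`pq = 0`, `R(p) = {q}` and `L(q) = {p}`. -/
def PerfectPair17 (p q : List Arr3) : Prop :=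
  NZPath17 k p ∧ NZPath17 k q ∧ srcL17 p = tgtL17 q ∧
  pathEl17 k p * pathEl17 k q = 0 ∧
  (∀ q' : List Arr3, NZPath17 k q' → tgtL17 q' = srcL17 p →
    pathEl17 k p * pathEl17 k q' = 0 → ∃ q'', q' = q ++ q'') ∧
  (∀ p' : List Arr3, NZPath17 k p' → srcL17 p' = tgtL17 q →
    pathEl17 k p' * pathEl17 k q = 0 → ∃ p'', p' = p'' ++ p)

/-- `p` is a perfect path: it lies on a cycle of perfect pairs. -/
def PerfectPath17 (p : List Arr3) : Prop :=
  ∃ (n : ℕ) (c : ℕ → List Arr3), 1 ≤ n ∧ c 0 = p ∧ c n = p ∧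
    ∀ i < n, PerfectPair17 k (c i) (c (i + 1))



inductive P9 : Type
  | e0 | e1 | xa | xb | xg | ba | ga | bg | bga
  deriving DecidableEq

instance : Fintype P9 :=
  ⟨{P9.e0, P9.e1, P9.xa, P9.xb, P9.xg, P9.ba, P9.ga, P9.bg, P9.bga}, by intro x; cases x <;> decide⟩

open P9 in
def comp9 : P9 → P9 → Option P9
  | e0, e0 => some e0 | e0, xb => some xb | e0, ba => some ba | e0, bg => some bg
  | e0, bga => some bga
  | e1, e1 => some e1 | e1, xa => some xa | e1, xg => some xg | e1, ga => some ga
  | xa, e0 => some xa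
  | xb, e1 => some xb | xb, xa => some ba | xb, xg => some bg | xb, ga => some bga
  | xg, e1 => some xg | xg, xa => some ga
  | ba, e0 => some ba
  | ga, e0 => some ga
  | bg, e1 => some bg | bg, xa => some bga
  | bga, e0 => some bga
  | _, _ => none

theorem comp9_assoc : ∀ r r' q : P9,
    Option.bind (comp9 r' q) (comp9 r) = Option.bind (comp9 r r') (fun p => comp9 p q) := by
  decide

open P9 in
/-- source idempotent of a basis path -/
def srcI : P9 → P9
  | e0 => e0 | e1 => e1 | xa => e0 | xb => e1 | xg => e1 | ba => e0 | ga => e0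
  | bg => e1 | bga => e0

theorem comp9_srcI : ∀ p : P9, comp9 p (srcI p) = some p := by decide


def Mx (r : P9) : Matrix P9 P9 k :=
  Matrix.of fun p q => if comp9 r q = some p then 1 else 0

theorem Mx_mul (r r' : P9) :
    (Mx k r * Mx k r' : Matrix P9 P9 k) = (comp9 r r').elim 0 (Mx k) := by
  ext p q
  rw [Matrix.mul_apply]
  have key : ∀ u : P9, (Mx k r p u * Mx k r' u q : k)
      = if comp9 r' q = some u ∧ comp9 r u = some p then 1 else 0 := by
    intro u
    simp only [Mx, Matrix.of_apply]
    split_ifs with h1 h2 h3 <;> simp_all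
  rw [Finset.sum_congr rfl fun u _ => key u]
  have hb : Option.bind (comp9 r' q) (comp9 r) = Option.bind (comp9 r r') (fun c => comp9 c q) :=
    comp9_assoc r r' q
  have lhs_eq : (∑ u : P9, if comp9 r' q = some u ∧ comp9 r u = some p then (1:k) else 0)
      = if Option.bind (comp9 r' q) (comp9 r) = some p then 1 else 0 := by
    rcases h : comp9 r' q with _ | u₀
    · simp [h]
    · simp only [h, Option.bind]
      rw [Finset.sum_congr rfl (fun u _ => show _ = if u = u₀ then (if comp9 r u = some p then (1:k) else 0) else 0 by
        by_cases h1 : u₀ = u <;> by_cases h2 : comp9 r u = some p <;> simp_all [eq_comm])]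
      rw [Finset.sum_ite_eq' Finset.univ u₀ (fun u => if comp9 r u = some p then (1:k) else 0)]
      simp
  rw [lhs_eq, hb]
  rcases hc : comp9 r r' with _ | c
  · simp [Option.bind]
  · simp [Option.bind, Mx, Matrix.of_apply]

theorem Mx_one : (Mx k P9.e0 + Mx k P9.e1 : Matrix P9 P9 k) = 1 := by
  ext p q
  cases p <;> cases q <;> simp [Mx, comp9, Matrix.one_apply]

/-- vertex idempotent index -/
def vtx : Fin 2 → P9 := fun v => if v = 0 then P9.e0 else P9.e1

noncomputable def Ee (v : Fin 2) : A17 k :=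
  RingQuot.mkAlgHom k (A17Rel k) (FreeAlgebra.ι k (PAGen.vert v))

noncomputable def Xe (e : Arr3) : A17 k :=
  RingQuot.mkAlgHom k (A17Rel k) (FreeAlgebra.ι k (PAGen.arr e))

lemma relEq {x y : FreeAlgebra k (PAGen (Fin 2) Arr3)} (h : A17Rel k x y) :
    RingQuot.mkAlgHom k (A17Rel k) x = RingQuot.mkAlgHom k (A17Rel k) y :=
  RingQuot.mkAlgHom_rel k h

lemma EE (v w : Fin 2) : Ee k v * Ee k w = if v = w then Ee k v else 0 := by
  split_ifs with h
  · subst h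
    have := relEq k (A17Rel.vert_idem (k := k) v)
    simpa [Ee, map_mul] using this
  · have := relEq k (A17Rel.vert_orth (k := k) v w h)
    simpa [Ee, map_mul] using this

lemma one17 : (1 : A17 k) = Ee k 0 + Ee k 1 := by
  have := relEq k (A17Rel.sum_vert (k := k))
  simp only [map_sum, Fin.sum_univ_two, map_add, map_one] at this
  simpa [Ee] using this.symm

lemma EX (v : Fin 2) (e : Arr3) : Ee k v * Xe k e = if v = t17 e then Xe k e else 0 := by
  have htgt : Ee k (t17 e) * Xe k e = Xe k e := by
    have := relEq k (A17Rel.arr_tgt (k := k) e)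
    simpa [Ee, Xe, map_mul] using this
  split_ifs with h
  · subst h; exact htgt
  · calc Ee k v * Xe k e = Ee k v * (Ee k (t17 e) * Xe k e) := by rw [htgt]
    _ = (Ee k v * Ee k (t17 e)) * Xe k e := by rw [mul_assoc]
    _ = 0 := by rw [EE, if_neg h, zero_mul]

lemma XE (e : Arr3) (v : Fin 2) : Xe k e * Ee k v = if v = s17 e then Xe k e else 0 := by
  have hsrc : Xe k e * Ee k (s17 e) = Xe k e := by
    have := relEq k (A17Rel.arr_src (k := k) e)
    simpa [Ee, Xe, map_mul] using this
  split_ifs with h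
  · subst h; exact hsrc
  · calc Xe k e * Ee k v = (Xe k e * Ee k (s17 e)) * Ee k v := by rw [hsrc]
    _ = Xe k e * (Ee k (s17 e) * Ee k v) := by rw [mul_assoc]
    _ = 0 := by rw [EE, if_neg (fun hh => h hh.symm), mul_zero]

lemma XXab : Xe k Arr3.a * Xe k Arr3.b = 0 := by
  have := relEq k (A17Rel.rel_ab (k := k))
  simpa [Xe, map_mul] using this

lemma XXgg : Xe k Arr3.g * Xe k Arr3.g = 0 := by
  have := relEq k (A17Rel.rel_gg (k := k))
  simpa [Xe, map_mul] using this

lemma XX0 (e f : Arr3) (h : s17 e ≠ t17 f) : Xe k e * Xe k f = 0 := by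
  have h1 : Xe k e * Ee k (s17 e) = Xe k e := by rw [XE, if_pos rfl]
  have h2 : Ee k (t17 f) * Xe k f = Xe k f := by rw [EX, if_pos rfl]
  calc Xe k e * Xe k f = (Xe k e * Ee k (s17 e)) * (Ee k (t17 f) * Xe k f) := by rw [h1, h2]
  _ = Xe k e * ((Ee k (s17 e) * Ee k (t17 f)) * Xe k f) := by rw [mul_assoc, mul_assoc]
  _ = 0 := by rw [EE, if_neg h, zero_mul, mul_zero]

@[simp] lemma pr_E0E0 : Ee k 0 * Ee k 0 = Ee k 0 := by rw [EE]; simp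
@[simp] lemma pr_E0E1 : Ee k 0 * Ee k 1 = 0 := by rw [EE]; simp
@[simp] lemma pr_E1E0 : Ee k 1 * Ee k 0 = 0 := by rw [EE]; simp
@[simp] lemma pr_E1E1 : Ee k 1 * Ee k 1 = Ee k 1 := by rw [EE]; simp
@[simp] lemma pr_E0Xa : Ee k 0 * Xe k Arr3.a = 0 := by rw [EX]; simp [t17]
@[simp] lemma pr_E0Xb : Ee k 0 * Xe k Arr3.b = Xe k Arr3.b := by rw [EX]; simp [t17]
@[simp] lemma pr_E0Xg : Ee k 0 * Xe k Arr3.g = 0 := by rw [EX]; simp [t17]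
@[simp] lemma pr_E1Xa : Ee k 1 * Xe k Arr3.a = Xe k Arr3.a := by rw [EX]; simp [t17]
@[simp] lemma pr_E1Xb : Ee k 1 * Xe k Arr3.b = 0 := by rw [EX]; simp [t17]
@[simp] lemma pr_E1Xg : Ee k 1 * Xe k Arr3.g = Xe k Arr3.g := by rw [EX]; simp [t17]
@[simp] lemma pr_XaE0 : Xe k Arr3.a * Ee k 0 = Xe k Arr3.a := by rw [XE]; simp [s17]
@[simp] lemma pr_XaE1 : Xe k Arr3.a * Ee k 1 = 0 := by rw [XE]; simp [s17]
@[simp] lemma pr_XbE0 : Xe k Arr3.b * Ee k 0 = 0 := by rw [XE]; simp [s17]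
@[simp] lemma pr_XbE1 : Xe k Arr3.b * Ee k 1 = Xe k Arr3.b := by rw [XE]; simp [s17]
@[simp] lemma pr_XgE0 : Xe k Arr3.g * Ee k 0 = 0 := by rw [XE]; simp [s17]
@[simp] lemma pr_XgE1 : Xe k Arr3.g * Ee k 1 = Xe k Arr3.g := by rw [XE]; simp [s17]
@[simp] lemma pr_XaXa : Xe k Arr3.a * Xe k Arr3.a = 0 := by exact XX0 k _ _ (by decide)
@[simp] lemma pr_XaXg : Xe k Arr3.a * Xe k Arr3.g = 0 := by exact XX0 k _ _ (by decide)
@[simp] lemma pr_XbXb : Xe k Arr3.b * Xe k Arr3.b = 0 := by exact XX0 k _ _ (by decide)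
@[simp] lemma pr_XgXb : Xe k Arr3.g * Xe k Arr3.b = 0 := by exact XX0 k _ _ (by decide)
@[simp] lemma pr_XaXb : Xe k Arr3.a * Xe k Arr3.b = 0 := XXab k
@[simp] lemma pr_XgXg : Xe k Arr3.g * Xe k Arr3.g = 0 := XXgg k

@[simp] lemma lf_E0E0 (z : A17 k) : Ee k 0 * (Ee k 0 * z) = Ee k 0 * z := by rw [← mul_assoc, pr_E0E0]
@[simp] lemma lf_E0E1 (z : A17 k) : Ee k 0 * (Ee k 1 * z) = 0 := by rw [← mul_assoc, pr_E0E1]; rw [zero_mul]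
@[simp] lemma lf_E1E0 (z : A17 k) : Ee k 1 * (Ee k 0 * z) = 0 := by rw [← mul_assoc, pr_E1E0]; rw [zero_mul]
@[simp] lemma lf_E1E1 (z : A17 k) : Ee k 1 * (Ee k 1 * z) = Ee k 1 * z := by rw [← mul_assoc, pr_E1E1]
@[simp] lemma lf_E0Xa (z : A17 k) : Ee k 0 * (Xe k Arr3.a * z) = 0 := by rw [← mul_assoc, pr_E0Xa]; rw [zero_mul]
@[simp] lemma lf_E0Xb (z : A17 k) : Ee k 0 * (Xe k Arr3.b * z) = Xe k Arr3.b * z := by rw [← mul_assoc, pr_E0Xb]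
@[simp] lemma lf_E0Xg (z : A17 k) : Ee k 0 * (Xe k Arr3.g * z) = 0 := by rw [← mul_assoc, pr_E0Xg]; rw [zero_mul]
@[simp] lemma lf_E1Xa (z : A17 k) : Ee k 1 * (Xe k Arr3.a * z) = Xe k Arr3.a * z := by rw [← mul_assoc, pr_E1Xa]
@[simp] lemma lf_E1Xb (z : A17 k) : Ee k 1 * (Xe k Arr3.b * z) = 0 := by rw [← mul_assoc, pr_E1Xb]; rw [zero_mul]
@[simp] lemma lf_E1Xg (z : A17 k) : Ee k 1 * (Xe k Arr3.g * z) = Xe k Arr3.g * z := by rw [← mul_assoc, pr_E1Xg]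
@[simp] lemma lf_XaE0 (z : A17 k) : Xe k Arr3.a * (Ee k 0 * z) = Xe k Arr3.a * z := by rw [← mul_assoc, pr_XaE0]
@[simp] lemma lf_XaE1 (z : A17 k) : Xe k Arr3.a * (Ee k 1 * z) = 0 := by rw [← mul_assoc, pr_XaE1]; rw [zero_mul]
@[simp] lemma lf_XbE0 (z : A17 k) : Xe k Arr3.b * (Ee k 0 * z) = 0 := by rw [← mul_assoc, pr_XbE0]; rw [zero_mul]
@[simp] lemma lf_XbE1 (z : A17 k) : Xe k Arr3.b * (Ee k 1 * z) = Xe k Arr3.b * z := by rw [← mul_assoc, pr_XbE1]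
@[simp] lemma lf_XgE0 (z : A17 k) : Xe k Arr3.g * (Ee k 0 * z) = 0 := by rw [← mul_assoc, pr_XgE0]; rw [zero_mul]
@[simp] lemma lf_XgE1 (z : A17 k) : Xe k Arr3.g * (Ee k 1 * z) = Xe k Arr3.g * z := by rw [← mul_assoc, pr_XgE1]
@[simp] lemma lf_XaXa (z : A17 k) : Xe k Arr3.a * (Xe k Arr3.a * z) = 0 := by rw [← mul_assoc, pr_XaXa]; rw [zero_mul]
@[simp] lemma lf_XaXg (z : A17 k) : Xe k Arr3.a * (Xe k Arr3.g * z) = 0 := by rw [← mul_assoc, pr_XaXg]; rw [zero_mul]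
@[simp] lemma lf_XbXb (z : A17 k) : Xe k Arr3.b * (Xe k Arr3.b * z) = 0 := by rw [← mul_assoc, pr_XbXb]; rw [zero_mul]
@[simp] lemma lf_XgXb (z : A17 k) : Xe k Arr3.g * (Xe k Arr3.b * z) = 0 := by rw [← mul_assoc, pr_XgXb]; rw [zero_mul]
@[simp] lemma lf_XaXb (z : A17 k) : Xe k Arr3.a * (Xe k Arr3.b * z) = 0 := by rw [← mul_assoc, pr_XaXb]; rw [zero_mul]
@[simp] lemma lf_XgXg (z : A17 k) : Xe k Arr3.g * (Xe k Arr3.g * z) = 0 := by rw [← mul_assoc, pr_XgXg]; rw [zero_mul]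

open P9 in
noncomputable def pi9 : P9 → A17 k
  | e0 => Ee k 0
  | e1 => Ee k 1
  | xa => Xe k Arr3.a
  | xb => Xe k Arr3.b
  | xg => Xe k Arr3.g
  | ba => Xe k Arr3.b * Xe k Arr3.a
  | ga => Xe k Arr3.g * Xe k Arr3.a
  | bg => Xe k Arr3.b * Xe k Arr3.g
  | bga => Xe k Arr3.b * (Xe k Arr3.g * Xe k Arr3.a)

lemma pi9_mul : ∀ p q : P9, pi9 k p * pi9 k q = (comp9 p q).elim 0 (pi9 k) := by
  intro p q
  cases p <;> cases q <;>
    simp [pi9, comp9, mul_assoc]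

open P9 in
def arrI : Arr3 → P9
  | Arr3.a => xa | Arr3.b => xb | Arr3.g => xg

noncomputable def Phi : A17 k →ₐ[k] Matrix P9 P9 k :=
  RingQuot.liftAlgHom k ⟨FreeAlgebra.lift k (fun x => match x with
    | PAGen.vert v => Mx k (vtx v)
    | PAGen.arr e => Mx k (arrI e)), by
    intro x y h
    cases h with
    | vert_idem v =>
        simp only [map_mul, FreeAlgebra.lift_ι_apply]
        fin_cases v <;> · rw [Mx_mul]; rfl
    | vert_orth v w h =>
        simp only [map_mul, FreeAlgebra.lift_ι_apply, map_zero]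
        fin_cases v <;> fin_cases w <;>
          first
            | exact absurd rfl h
            | (rw [Mx_mul]; rfl)
    | sum_vert =>
        simp only [map_sum, Fin.sum_univ_two, map_add, FreeAlgebra.lift_ι_apply, map_one]
        exact Mx_one k
    | arr_tgt e =>
        simp only [map_mul, FreeAlgebra.lift_ι_apply]
        cases e <;> (rw [Mx_mul]; rfl)
    | arr_src e =>
        simp only [map_mul, FreeAlgebra.lift_ι_apply]
        cases e <;> (rw [Mx_mul]; rfl)
    | rel_ab =>
        simp only [map_mul, FreeAlgebra.lift_ι_apply, map_zero]
        rw [Mx_mul]; rfl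
    | rel_gg =>
        simp only [map_mul, FreeAlgebra.lift_ι_apply, map_zero]
        rw [Mx_mul]; rfl⟩

lemma Phi_E (v : Fin 2) : Phi k (Ee k v) = Mx k (vtx v) := by
  simp [Phi, Ee, RingQuot.liftAlgHom_mkAlgHom_apply, FreeAlgebra.lift_ι_apply]

lemma Phi_X (e : Arr3) : Phi k (Xe k e) = Mx k (arrI e) := by
  simp [Phi, Xe, RingQuot.liftAlgHom_mkAlgHom_apply, FreeAlgebra.lift_ι_apply]

lemma Phi_pi : ∀ p : P9, Phi k (pi9 k p) = Mx k p := by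
  intro p
  cases p <;>
    simp [pi9, map_mul, Phi_E, Phi_X, arrI, vtx, Mx_mul, comp9, Option.elim]

/-- coordinate functions -/
noncomputable def co (p : P9) (x : A17 k) : k := Phi k x p (srcI p)

lemma co_add (p : P9) (x y : A17 k) : co k p (x + y) = co k p x + co k p y := by
  simp [co, map_add, Matrix.add_apply]

lemma co_smul (p : P9) (c : k) (x : A17 k) : co k p (c • x) = c * co k p x := by
  simp [co, map_smul, Matrix.smul_apply, smul_eq_mul]

lemma co_zero (p : P9) : co k p (0 : A17 k) = 0 := by
  simp [co, map_zero]

lemma Mx_entry (q p : P9) : (Mx k q) p (srcI p) = if q = p then 1 else 0 := by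
  have h : ∀ q p : P9, (comp9 q (srcI p) = some p) ↔ q = p := by decide
  simp only [Mx, Matrix.of_apply]
  by_cases hqp : q = p
  · rw [if_pos ((h q p).mpr hqp), if_pos hqp]
  · rw [if_neg (fun hh => hqp ((h q p).mp hh)), if_neg hqp]

lemma co_pi (p q : P9) : co k p (pi9 k q) = if q = p then 1 else 0 := by
  rw [co, Phi_pi, Mx_entry]

lemma pi9_ne (p : P9) : pi9 k p ≠ 0 := by
  intro h
  have h1 : co k p (pi9 k p) = 1 := by rw [co_pi, if_pos rfl]
  rw [h, co_zero] at h1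
  exact zero_ne_one h1

lemma span_pi_top : Submodule.span k (Set.range (pi9 k)) = ⊤ := by
  have hmul : ∀ x ∈ Submodule.span k (Set.range (pi9 k)),
      ∀ y ∈ Submodule.span k (Set.range (pi9 k)),
      x * y ∈ Submodule.span k (Set.range (pi9 k)) := by
    have hle : Submodule.span k (Set.range (pi9 k)) * Submodule.span k (Set.range (pi9 k)) ≤
        Submodule.span k (Set.range (pi9 k)) := by
      rw [Submodule.span_mul_span]
      refine Submodule.span_le.2 ?_
      rintro z hz
      rw [Set.mem_mul] at hz
      obtain ⟨u, ⟨p, rfl⟩, v, ⟨q, rfl⟩, rfl⟩ := hz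
      rw [pi9_mul]
      cases h : comp9 p q with
      | none => exact Submodule.zero_mem _
      | some r => exact Submodule.subset_span ⟨r, rfl⟩
    exact fun x hx y hy => hle (Submodule.mul_mem_mul hx hy)
  rw [eq_top_iff]
  rintro x -
  obtain ⟨y, rfl⟩ := RingQuot.mkAlgHom_surjective k (A17Rel k) x
  induction y using FreeAlgebra.induction with
  | grade0 r =>
      rw [AlgHom.commutes, Algebra.algebraMap_eq_smul_one]
      refine Submodule.smul_mem _ r ?_
      rw [one17]
      exact Submodule.add_mem _ (Submodule.subset_span ⟨P9.e0, rfl⟩)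
        (Submodule.subset_span ⟨P9.e1, rfl⟩)
  | grade1 z =>
      cases z with
      | vert v =>
          fin_cases v
          · exact Submodule.subset_span ⟨P9.e0, rfl⟩
          · exact Submodule.subset_span ⟨P9.e1, rfl⟩
      | arr e =>
          cases e
          · exact Submodule.subset_span ⟨P9.xa, rfl⟩
          · exact Submodule.subset_span ⟨P9.xb, rfl⟩
          · exact Submodule.subset_span ⟨P9.xg, rfl⟩
  | mul x y ihx ihy =>
      rw [map_mul]
      exact hmul _ ihx _ ihy
  | add x y ihx ihy =>
      rw [map_add]
      exact Submodule.add_mem _ ihx ihy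

lemma exists_repr (x : A17 k) : ∃ c : P9 → k, ∑ p, c p • pi9 k p = x := by
  have : x ∈ Submodule.span k (Set.range (pi9 k)) := by
    rw [span_pi_top]; exact Submodule.mem_top
  exact (Submodule.mem_span_range_iff_exists_fun k).1 this

lemma co_sum (c : P9 → k) (p : P9) : co k p (∑ q, c q • pi9 k q) = c p := by
  simp only [co, map_sum, map_smul, Matrix.sum_apply, Matrix.smul_apply, Phi_pi,
    smul_eq_mul, Mx_entry, mul_ite, mul_one, mul_zero]
  simp [Finset.sum_ite_eq']

lemma repr_eq (x : A17 k) : ∑ p, co k p x • pi9 k p = x := by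
  obtain ⟨c, hc⟩ := exists_repr k x
  calc ∑ p, co k p x • pi9 k p = ∑ p, c p • pi9 k p :=
        Finset.sum_congr rfl (fun p _ => by rw [← hc, co_sum])
  _ = x := hc

lemma univ_P9 : (Finset.univ : Finset P9) =
    {P9.e0, P9.e1, P9.xa, P9.xb, P9.xg, P9.ba, P9.ga, P9.bg, P9.bga} := by decide

lemma sum_P9 {M : Type} [AddCommMonoid M] (f : P9 → M) :
    ∑ p, f p = f P9.e0 + (f P9.e1 + (f P9.xa + (f P9.xb + (f P9.xg +
      (f P9.ba + (f P9.ga + (f P9.bg + f P9.bga))))))) := by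
  rw [univ_P9]
  rw [Finset.sum_insert (by decide), Finset.sum_insert (by decide),
    Finset.sum_insert (by decide), Finset.sum_insert (by decide),
    Finset.sum_insert (by decide), Finset.sum_insert (by decide),
    Finset.sum_insert (by decide), Finset.sum_insert (by decide),
    Finset.sum_singleton]

lemma gammaEl_eq : gammaEl k = pi9 k P9.xg := by
  simp [gammaEl, pathEl17, pi9, Xe]

/-- the projective cover `A·e₂` -/
noncomputable def P0 : Submodule (A17 k) (A17 k) := Submodule.span (A17 k) {pi9 k P9.e1}

lemma mem_P0_iff (x : A17 k) : x ∈ P0 k ↔ ∃ r, r * pi9 k P9.e1 = x :=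
  Ideal.mem_span_singleton'

lemma mem_AGamma_iff (x : A17 k) : x ∈ AGamma k ↔ ∃ r, r * pi9 k P9.xg = x := by
  rw [show AGamma k = Submodule.span (A17 k) {pi9 k P9.xg} by rw [AGamma, gammaEl_eq]]
  exact Ideal.mem_span_singleton'

lemma P0_mul_e1 {x : A17 k} (hx : x ∈ P0 k) : x * pi9 k P9.e1 = x := by
  obtain ⟨r, rfl⟩ := (mem_P0_iff k x).1 hx
  rw [mul_assoc, pi9_mul]
  rfl

lemma P0_repr {x : A17 k} (hx : x ∈ P0 k) :
    x = co k P9.e1 x • pi9 k P9.e1 + (co k P9.xb x • pi9 k P9.xb +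
      (co k P9.xg x • pi9 k P9.xg + co k P9.bg x • pi9 k P9.bg)) := by
  conv_lhs => rw [← P0_mul_e1 k hx, ← repr_eq k x, Finset.sum_mul]
  rw [sum_P9 (fun p => co k p x • pi9 k p * pi9 k P9.e1)]
  simp only [smul_mul_assoc, pi9_mul, comp9, Option.elim, smul_zero, zero_add, add_zero]

lemma P0_mul_gam {x : A17 k} (hx : x ∈ P0 k) :
    x * pi9 k P9.xg = co k P9.e1 x • pi9 k P9.xg + co k P9.xb x • pi9 k P9.bg := by
  conv_lhs => rw [P0_repr k hx]
  simp only [add_mul, smul_mul_assoc, pi9_mul, comp9, Option.elim, smul_zero, add_zero]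

lemma coeffs_of_gam_eq {c1 c2 : k}
    (h : c1 • pi9 k P9.xg + c2 • pi9 k P9.bg = pi9 k P9.xg) : c1 = 1 ∧ c2 = 0 := by
  constructor
  · have := congrArg (co k P9.xg) h
    simpa [co_add, co_smul, co_pi] using this
  · have := congrArg (co k P9.bg) h
    simpa [co_add, co_smul, co_pi] using this

lemma coeffs_of_gam_zero {c1 c2 : k}
    (h : c1 • pi9 k P9.xg + c2 • pi9 k P9.bg = 0) : c1 = 0 ∧ c2 = 0 := by
  constructor
  · have := congrArg (co k P9.xg) h
    simpa [co_add, co_smul, co_pi, co_zero] using this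
  · have := congrArg (co k P9.bg) h
    simpa [co_add, co_smul, co_pi, co_zero] using this

lemma gam_mem_P0 : pi9 k P9.xg ∈ P0 k := by
  rw [mem_P0_iff]
  exact ⟨pi9 k P9.xg, by rw [pi9_mul]; rfl⟩

lemma AGamma_le_P0 : AGamma k ≤ P0 k := by
  rw [AGamma, Submodule.span_le, Set.singleton_subset_iff, gammaEl_eq]
  exact gam_mem_P0 k

lemma AGamma_mul_gam {x : A17 k} (hx : x ∈ AGamma k) : x * pi9 k P9.xg = 0 := by
  obtain ⟨r, rfl⟩ := (mem_AGamma_iff k x).1 hx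
  rw [mul_assoc, pi9_mul]
  simp [comp9]

lemma P0_gam0_mem {x : A17 k} (hx : x ∈ P0 k) (h0 : x * pi9 k P9.xg = 0) :
    x ∈ AGamma k := by
  have hcc := (P0_mul_gam k hx) ▸ h0
  obtain ⟨hc1, hc2⟩ := coeffs_of_gam_zero k hcc
  rw [mem_AGamma_iff]
  refine ⟨algebraMap k (A17 k) (co k P9.xg x) +
    algebraMap k (A17 k) (co k P9.bg x) * pi9 k P9.xb, ?_⟩
  rw [add_mul, mul_assoc, ← Algebra.smul_def, ← Algebra.smul_def (co k P9.bg x)]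
  conv_rhs => rw [P0_repr k hx, hc1, hc2]
  rw [pi9_mul]
  simp [comp9]

/-- right multiplication by `γ` -/
noncomputable def rmulGam : A17 k →ₗ[A17 k] A17 k :=
  LinearMap.toSpanSingleton (A17 k) (A17 k) (pi9 k P9.xg)

noncomputable def f0 : ↥(P0 k) →ₗ[A17 k] ↥(AGamma k) :=
  LinearMap.codRestrict (AGamma k) ((rmulGam k).comp (P0 k).subtype) (by
    rintro ⟨x, hx⟩
    show x • pi9 k P9.xg ∈ AGamma k
    rw [mem_AGamma_iff, smul_eq_mul]
    exact ⟨x, rfl⟩)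

lemma f0_apply (x : ↥(P0 k)) : ((f0 k x : A17 k)) = (x : A17 k) * pi9 k P9.xg := by
  simp [f0, rmulGam, LinearMap.toSpanSingleton_apply, smul_eq_mul]

lemma f0_surj : Function.Surjective (f0 k) := by
  rintro ⟨y, hy⟩
  obtain ⟨r, rfl⟩ := (mem_AGamma_iff k y).1 hy
  refine ⟨⟨r * pi9 k P9.e1, (mem_P0_iff k _).2 ⟨r, rfl⟩⟩, ?_⟩
  apply Subtype.ext
  rw [f0_apply]
  show r * pi9 k P9.e1 * pi9 k P9.xg = r * pi9 k P9.xg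
  rw [mul_assoc, pi9_mul]
  rfl

lemma proj_P0 : Module.Projective (A17 k) ↥(P0 k) := by
  refine Module.Projective.of_split (P0 k).subtype
    (LinearMap.codRestrict (P0 k) (LinearMap.toSpanSingleton (A17 k) (A17 k) (pi9 k P9.e1))
      (fun x => (mem_P0_iff k _).2 ⟨x, by
        rw [LinearMap.toSpanSingleton_apply, smul_eq_mul]⟩)) ?_
  ext x
  simp only [LinearMap.comp_apply, LinearMap.codRestrict_apply,
    LinearMap.toSpanSingleton_apply, LinearMap.id_apply, Submodule.subtype_apply]
  rw [smul_eq_mul]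
  exact P0_mul_e1 k x.2

lemma f0_min (N : Submodule (A17 k) ↥(P0 k)) (hN : N ≠ ⊤)
    (hs : Function.Surjective ((f0 k) ∘ₗ N.subtype)) : False := by
  obtain ⟨n, hn⟩ := hs ⟨pi9 k P9.xg, (mem_AGamma_iff k _).2 ⟨pi9 k P9.e1, by
    rw [pi9_mul]; rfl⟩⟩
  set x : A17 k := ((n : ↥(P0 k)) : A17 k) with hxdef
  have hxP0 : x ∈ P0 k := ((n : ↥(P0 k))).2
  have hxg : x * pi9 k P9.xg = pi9 k P9.xg := by
    have h' := congrArg Subtype.val hn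
    rw [LinearMap.comp_apply, f0_apply] at h'
    exact h'
  obtain ⟨hc1, hc2⟩ := coeffs_of_gam_eq k ((P0_mul_gam k hxP0) ▸ hxg)
  have hgx : pi9 k P9.xg * x = pi9 k P9.xg := by
    conv_lhs => rw [P0_repr k hxP0, hc1, hc2]
    simp only [mul_add, mul_smul_comm, pi9_mul, comp9, Option.elim, smul_zero,
      add_zero, zero_smul, zero_add, one_smul]
  have hbgx : pi9 k P9.bg * x = pi9 k P9.bg := by
    conv_lhs => rw [P0_repr k hxP0, hc1, hc2]
    simp only [mul_add, mul_smul_comm, pi9_mul, comp9, Option.elim, smul_zero,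
      add_zero, zero_smul, zero_add, one_smul]
  obtain ⟨c3, hc3⟩ : ∃ c3 : k, c3 = co k P9.xg x := ⟨_, rfl⟩
  obtain ⟨c4, hc4⟩ : ∃ c4 : k, c4 = co k P9.bg x := ⟨_, rfl⟩
  have hmN : ((n : ↥(P0 k)) + algebraMap k (A17 k) (-c3) • (pi9 k P9.xg • (n : ↥(P0 k)))
      + algebraMap k (A17 k) (-c4) • (pi9 k P9.bg • (n : ↥(P0 k)))) ∈ N :=
    N.add_mem (N.add_mem n.2
        (N.smul_mem _ (N.smul_mem _ n.2)))
      (N.smul_mem _ (N.smul_mem _ n.2))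
  have hmval : (((n : ↥(P0 k)) + algebraMap k (A17 k) (-c3) • (pi9 k P9.xg • (n : ↥(P0 k)))
      + algebraMap k (A17 k) (-c4) • (pi9 k P9.bg • (n : ↥(P0 k)))) : A17 k) = pi9 k P9.e1 := by
    show x + algebraMap k (A17 k) (-c3) • (pi9 k P9.xg • x)
        + algebraMap k (A17 k) (-c4) • (pi9 k P9.bg • x) = pi9 k P9.e1
    simp only [smul_eq_mul]
    rw [hgx, hbgx, ← Algebra.smul_def, ← Algebra.smul_def]
    conv_lhs => rw [P0_repr k hxP0, hc1, hc2]
    rw [← hc3, ← hc4, one_smul, zero_smul, zero_add]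
    module
  apply hN
  rw [eq_top_iff]
  rintro ⟨y, hy⟩ -
  obtain ⟨r, hr⟩ := (mem_P0_iff k y).1 hy
  have heq : (⟨y, hy⟩ : ↥(P0 k)) = r • ((n : ↥(P0 k))
      + algebraMap k (A17 k) (-c3) • (pi9 k P9.xg • (n : ↥(P0 k)))
      + algebraMap k (A17 k) (-c4) • (pi9 k P9.bg • (n : ↥(P0 k)))) := by
    apply Subtype.ext
    simp only [Submodule.coe_smul, Submodule.coe_add]
    rw [hmval, smul_eq_mul, hr]
  rw [heq]
  exact N.smul_mem r hmN

lemma cover_f0 : IsProjCover (A17 k) (P := ↥(P0 k)) (M := ↥(AGamma k)) (f0 k) :=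
  ⟨proj_P0 k, f0_surj k, fun N hN hs => f0_min k N hN hs⟩

noncomputable def toKer : ↥(AGamma k) →ₗ[A17 k] ↥(LinearMap.ker (f0 k)) :=
  LinearMap.codRestrict (LinearMap.ker (f0 k)) (Submodule.inclusion (AGamma_le_P0 k)) (by
    intro y
    rw [LinearMap.mem_ker]
    apply Subtype.ext
    rw [f0_apply]
    exact AGamma_mul_gam k y.2)

lemma toKer_bij : Function.Bijective (toKer k) := by
  constructor
  · intro y z h
    apply Subtype.ext
    have := congrArg (fun w => ((w : ↥(LinearMap.ker (f0 k))) : ↥(P0 k)).1) h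
    exact this
  · rintro ⟨⟨x, hxP0⟩, hker⟩
    rw [LinearMap.mem_ker] at hker
    have h0 : x * pi9 k P9.xg = 0 := by
      have := congrArg Subtype.val hker
      rw [f0_apply] at this
      exact this
    exact ⟨⟨x, P0_gam0_mem k hxP0 h0⟩, Subtype.ext (Subtype.ext rfl)⟩

noncomputable def kerEquiv : ↥(AGamma k) ≃ₗ[A17 k] ↥(LinearMap.ker (f0 k)) :=
  LinearEquiv.ofBijective (toKer k) (toKer_bij k)

lemma pi_xg_ne_zero : pi9 k P9.xg ≠ 0 := pi9_ne k P9.xg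

lemma notProjAGamma : ¬ Module.Projective (A17 k) ↥(AGamma k) := by
  intro hproj
  obtain ⟨s, hs⟩ := Module.projective_lifting_property (f0 k) LinearMap.id (f0_surj k)
  have hs_id : ∀ m, (f0 k) (s m) = m := fun m => by
    have := congrArg (fun g => g m) (congrArg DFunLike.coe hs)
    simpa using this
  have hrange : LinearMap.range s = ⊤ := by
    by_contra hne
    refine f0_min k (LinearMap.range s) hne ?_
    intro m
    exact ⟨⟨s m, ⟨m, rfl⟩⟩, hs_id m⟩
  have hssurj : Function.Surjective s := LinearMap.range_eq_top.mp hrange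
  have hf0inj : Function.Injective (f0 k) := by
    intro u v huv
    obtain ⟨u', rfl⟩ := hssurj u
    obtain ⟨v', rfl⟩ := hssurj v
    rw [hs_id u', hs_id v'] at huv
    rw [huv]
  have h0 : (⟨pi9 k P9.xg, gam_mem_P0 k⟩ : ↥(P0 k)) = 0 := by
    apply hf0inj
    apply Subtype.ext
    rw [f0_apply, map_zero]
    show pi9 k P9.xg * pi9 k P9.xg = (0 : ↥(AGamma k)).1
    rw [pi9_mul]
    rfl
  exact pi_xg_ne_zero k (congrArg Subtype.val h0)


theorem coverUnique (A : Type) [Ring A] {P P' M : Type} [AddCommGroup P] [Module A P]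
    [AddCommGroup P'] [Module A P'] [AddCommGroup M] [Module A M]
    {f : P →ₗ[A] M} {f' : P' →ₗ[A] M} (hf : IsProjCover A f) (hf' : IsProjCover A f') :
    Nonempty ((LinearMap.ker f) ≃ₗ[A] (LinearMap.ker f')) := by
  obtain ⟨hP, hfs, hfm⟩ := hf
  obtain ⟨hP', hfs', hfm'⟩ := hf'
  have := hP
  obtain ⟨g, hg⟩ := Module.projective_lifting_property f' f hfs'
  have hgap : ∀ p, f' (g p) = f p := fun p => by
    have := congrArg (fun h => h p) (congrArg DFunLike.coe hg)
    simpa using this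
  have hgs : Function.Surjective g := by
    by_contra hns
    refine hfm' (LinearMap.range g)
      (fun htop => hns (LinearMap.range_eq_top.mp htop)) ?_
    intro m
    obtain ⟨p, hp⟩ := hfs m
    exact ⟨⟨g p, ⟨p, rfl⟩⟩, by rw [show ((f' ∘ₗ (LinearMap.range g).subtype)
      ⟨g p, ⟨p, rfl⟩⟩) = f' (g p) from rfl, hgap, hp]⟩
  have := hP'
  obtain ⟨s, hs⟩ := Module.projective_lifting_property g LinearMap.id hgs
  have hgs_id : ∀ q, g (s q) = q := fun q => by
    have := congrArg (fun h => h q) (congrArg DFunLike.coe hs)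
    simpa using this
  have hss : Function.Surjective s := by
    by_contra hns
    refine hfm (LinearMap.range s)
      (fun htop => hns (LinearMap.range_eq_top.mp htop)) ?_
    intro m
    obtain ⟨p', hp'⟩ := hfs' m
    refine ⟨⟨s p', ⟨p', rfl⟩⟩, ?_⟩
    show f (s p') = m
    rw [← hgap (s p'), hgs_id p']
    exact hp'
  have hginj : Function.Injective g := by
    intro p₁ p₂ hpp
    obtain ⟨q₁, rfl⟩ := hss p₁
    obtain ⟨q₂, rfl⟩ := hss p₂
    rw [hgs_id q₁, hgs_id q₂] at hpp
    rw [hpp]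
  let e : P ≃ₗ[A] P' := LinearEquiv.ofBijective g ⟨hginj, hgs⟩
  have hmap : (LinearMap.ker f).map (e : P →ₗ[A] P') = LinearMap.ker f' := by
    apply le_antisymm
    · rintro y ⟨x, hx, rfl⟩
      refine LinearMap.mem_ker.mpr ?_
      show f' (g x) = 0
      rw [hgap]
      exact LinearMap.mem_ker.mp hx
    · intro y hy
      obtain ⟨x, rfl⟩ := hgs y
      refine ⟨x, LinearMap.mem_ker.mpr ?_, rfl⟩
      rw [← hgap]
      exact LinearMap.mem_ker.mp hy
  exact ⟨(e.submoduleMap (LinearMap.ker f)).trans (LinearEquiv.ofEq _ _ hmap)⟩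

lemma pathEl_cons (e : Arr3) (l : List Arr3) :
    pathEl17 k (e :: l) = Xe k e * pathEl17 k l := by
  simp [pathEl17, Xe]

lemma pathEl_single (e : Arr3) : pathEl17 k [e] = Xe k e := by
  simp [pathEl17, Xe]

lemma pathEl_g : pathEl17 k [Arr3.g] = pi9 k P9.xg := pathEl_single k Arr3.g

lemma head_a (l : List Arr3) (hch : IsPathList (Fin 2) Arr3 s17 t17 (Arr3.a :: l))
    (hnz : pathEl17 k (Arr3.a :: l) ≠ 0) : l = [] := by
  cases l with
  | nil => rfl
  | cons f r =>
    exfalso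
    have hsf : s17 Arr3.a = t17 f := (List.isChain_cons_cons.mp hch).1
    have hfb : f = Arr3.b := by
      cases f with
      | a => exact absurd hsf (by decide)
      | b => rfl
      | g => exact absurd hsf (by decide)
    subst hfb
    apply hnz
    rw [pathEl_cons, pathEl_cons, lf_XaXb]

lemma last_b (l : List Arr3) : IsPathList (Fin 2) Arr3 s17 t17 l → pathEl17 k l ≠ 0 →
    l.getLast? = some Arr3.b → l = [Arr3.b] := by
  induction l with
  | nil => intro _ _ h; simp at h
  | cons e t ih =>
    cases t with
    | nil =>
      intro _ _ h
      simp at h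
      rw [h]
    | cons f r =>
      intro hch hnz hlast
      have h1 : s17 e = t17 f := (List.isChain_cons_cons.mp hch).1
      have hch' : IsPathList (Fin 2) Arr3 s17 t17 (f :: r) := (List.isChain_cons_cons.mp hch).2
      have hnz' : pathEl17 k (f :: r) ≠ 0 := fun h0 => hnz (by rw [pathEl_cons, h0, mul_zero])
      have hlast' : (f :: r).getLast? = some Arr3.b := by
        rw [← List.getLast?_cons_cons (a := e)]
        exact hlast
      have hfr := ih hch' hnz' hlast'
      injection hfr with hf hr
      subst hf
      subst hr
      have he : e = Arr3.a := by
        cases e with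
        | a => rfl
        | b => exact absurd h1 (by decide)
        | g => exact absurd h1 (by decide)
      subst he
      exact absurd (by rw [pathEl_cons, pathEl_cons, lf_XaXb]) hnz

lemma NZg : NZPath17 k [Arr3.g] :=
  ⟨by simp, List.isChain_singleton _, by rw [pathEl_g]; exact pi9_ne k P9.xg⟩

lemma perfectPairGG : PerfectPair17 k [Arr3.g] [Arr3.g] := by
  refine ⟨NZg k, NZg k, rfl, ?_, ?_, ?_⟩
  · rw [pathEl_g, pi9_mul]
    rfl
  · rintro q' ⟨hne, hch, hnz⟩ htgt h0
    cases q' with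
    | nil => exact absurd rfl hne
    | cons e rest =>
      cases e with
      | a =>
        have hrest : rest = [] := head_a k rest hch hnz
        subst hrest
        exfalso
        apply pi9_ne k P9.ga
        have hh : pathEl17 k [Arr3.g] * pathEl17 k [Arr3.a] = pi9 k P9.ga := by
          rw [pathEl_g, pathEl_single]
          show pi9 k P9.xg * pi9 k P9.xa = pi9 k P9.ga
          rw [pi9_mul]
          rfl
        exact hh ▸ h0
      | b =>
        have h' : (0 : Fin 2) = 1 := htgt
        exact absurd h' (by decide)
      | g => exact ⟨rest, rfl⟩
  · rintro p' ⟨hne, hch, hnz⟩ hsrc h0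
    rcases List.eq_nil_or_concat p' with h | ⟨r, x, rfl⟩
    · exact absurd h hne
    · simp only [List.concat_eq_append] at hne hch hnz hsrc h0 ⊢
      have hlast : (r ++ [x]).getLast! = x :=
        List.getLast!_of_getLast? List.getLast?_concat
      cases x with
      | a =>
        exfalso
        have h' : s17 Arr3.a = (1 : Fin 2) := by
          rw [show s17 Arr3.a = s17 ((r ++ [Arr3.a]).getLast!) by rw [hlast]]
          exact hsrc
        exact absurd h' (by decide)
      | b =>
        exfalso
        have hpb : r ++ [Arr3.b] = [Arr3.b] :=
          last_b k _ hch hnz List.getLast?_concat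
        rw [hpb] at h0
        apply pi9_ne k P9.bg
        have hh : pathEl17 k [Arr3.b] * pathEl17 k [Arr3.g] = pi9 k P9.bg := by
          rw [pathEl_g, pathEl_single]
          show pi9 k P9.xb * pi9 k P9.xg = pi9 k P9.bg
          rw [pi9_mul]
          rfl
        exact hh ▸ h0
      | g => exact ⟨r, rfl⟩

/-- For `A = kQ/⟨αβ, γ²⟩` the module `Aγ` satisfies `Ω(Aγ) ≅ Aγ` (it is `1`-periodic),
it is not projective, and `γ` is a perfect path. -/
theorem stmt17 (k : Type) [Field k] :
    (∀ S : Mdl (A17 k), IsSyz (A17 k) S (ModuleCat.of (A17 k) (AGamma k)) →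
      Nonempty (S ≃ₗ[A17 k] AGamma k)) ∧
    ¬ Module.Projective (A17 k) (AGamma k) ∧
    PerfectPath17 k [Arr3.g] := by
  refine ⟨?_, notProjAGamma k, ?_⟩
  · rintro S ⟨P, f, hfin, hcov, ⟨eS⟩⟩
    obtain ⟨eK⟩ := coverUnique (A17 k) hcov (cover_f0 k)
    exact ⟨eS.trans (eK.trans (kerEquiv k).symm)⟩
  · exact ⟨1, fun _ => [Arr3.g], le_refl 1, rfl, rfl, fun i _ => perfectPairGG k⟩


end Stmt17
end
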